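/- In the setting of anti-commuting case p = 0: if ω₁, ω₂ are symplectic forms and B is skew-symmetric with (Bω₂⁻¹)² + (ω₁ω₂⁻¹)² = -Id and Bω₂⁻¹ commutes with ω₁ω₂⁻¹, then the four relations hold: ω₂⁻¹ω₁ + ω₁⁻¹ω₂ + ω₁⁻¹Bω₂⁻¹B = 0, ω₁ω₂⁻¹ + ω₂ω₁⁻¹ + Bω₂⁻¹Bω₁⁻¹ = 0, ω₁⁻¹Bω₂⁻¹ = ω₂⁻¹Bω₁⁻¹, and ω₁ω₂⁻¹B = Bω₂⁻¹ω₁. -/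
import Mathlib


/-- Anti-commuting case `p = 0`: if `(Bω₂⁻¹)² + (ω₁ω₂⁻¹)² = -Id` and
`Bω₂⁻¹` commutes with `ω₁ω₂⁻¹`, then the four relations hold:
`ω₂⁻¹ω₁ + ω₁⁻¹ω₂ + ω₁⁻¹Bω₂⁻¹B = 0`, `ω₁ω₂⁻¹ + ω₂ω₁⁻¹ + Bω₂⁻¹Bω₁⁻¹ = 0`,
`ω₁⁻¹Bω₂⁻¹ = ω₂⁻¹Bω₁⁻¹`, `ω₁ω₂⁻¹B = Bω₂⁻¹ω₁`. -/
theorem stmt10 {V : Type*} [AddCommGroup V] [Module ℝ V] [FiniteDimensional ℝ V]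
    (ω₁ ω₂ : V ≃ₗ[ℝ] Module.Dual ℝ V)
    (hω₁ : ∀ x y, ω₁ x y = -ω₁ y x) (hω₂ : ∀ x y, ω₂ x y = -ω₂ y x)
    (B : V →ₗ[ℝ] Module.Dual ℝ V) (hB : ∀ x y, B x y = -B y x)
    (hsq : (B ∘ₗ ω₂.symm.toLinearMap) ∘ₗ (B ∘ₗ ω₂.symm.toLinearMap)
        + (ω₁.toLinearMap ∘ₗ ω₂.symm.toLinearMap) ∘ₗ (ω₁.toLinearMap ∘ₗ ω₂.symm.toLinearMap)
      = -LinearMap.id)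
    (hcomm : (B ∘ₗ ω₂.symm.toLinearMap) ∘ₗ (ω₁.toLinearMap ∘ₗ ω₂.symm.toLinearMap)
      = (ω₁.toLinearMap ∘ₗ ω₂.symm.toLinearMap) ∘ₗ (B ∘ₗ ω₂.symm.toLinearMap)) :
    ω₂.symm.toLinearMap ∘ₗ ω₁.toLinearMap + ω₁.symm.toLinearMap ∘ₗ ω₂.toLinearMap
        + ω₁.symm.toLinearMap ∘ₗ B ∘ₗ ω₂.symm.toLinearMap ∘ₗ B = 0 ∧
    ω₁.toLinearMap ∘ₗ ω₂.symm.toLinearMap + ω₂.toLinearMap ∘ₗ ω₁.symm.toLinearMap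
        + B ∘ₗ ω₂.symm.toLinearMap ∘ₗ B ∘ₗ ω₁.symm.toLinearMap = 0 ∧
    ω₁.symm.toLinearMap ∘ₗ B ∘ₗ ω₂.symm.toLinearMap
      = ω₂.symm.toLinearMap ∘ₗ B ∘ₗ ω₁.symm.toLinearMap ∧
    ω₁.toLinearMap ∘ₗ ω₂.symm.toLinearMap ∘ₗ B = B ∘ₗ ω₂.symm.toLinearMap ∘ₗ ω₁.toLinearMap := by
  have hsq' : ∀ f : Module.Dual ℝ V,
      B (ω₂.symm (B (ω₂.symm f))) + ω₁ (ω₂.symm (ω₁ (ω₂.symm f))) = -f := by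
    intro f
    have := LinearMap.ext_iff.mp hsq f
    simpa using this
  have hcomm' : ∀ f : Module.Dual ℝ V,
      B (ω₂.symm (ω₁ (ω₂.symm f))) = ω₁ (ω₂.symm (B (ω₂.symm f))) := by
    intro f
    have := LinearMap.ext_iff.mp hcomm f
    simpa using this
  have h4 : ∀ x : V, ω₁ (ω₂.symm (B x)) = B (ω₂.symm (ω₁ x)) := by
    intro x
    have := hcomm' (ω₂ x)
    simpa using this.symm
  refine ⟨?_, ?_, ?_, ?_⟩
  · ext x
    have h := hsq' (ω₂ x)
    simp only [LinearEquiv.symm_apply_apply] at h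
    have h2 : ω₁.symm (B (ω₂.symm (B x))) + ω₂.symm (ω₁ x) = -(ω₁.symm (ω₂ x)) := by
      have := congrArg ω₁.symm h
      simpa [map_add] using this
    simp only [LinearMap.add_apply, LinearMap.coe_comp, Function.comp_apply,
      LinearEquiv.coe_coe, LinearMap.zero_apply]
    rw [show ω₂.symm (ω₁ x) + ω₁.symm (ω₂ x) + ω₁.symm (B (ω₂.symm (B x)))
        = (ω₁.symm (B (ω₂.symm (B x))) + ω₂.symm (ω₁ x)) + ω₁.symm (ω₂ x) from by abel, h2]
    abel
  · ext f x
    have h := hsq' (ω₂ (ω₁.symm f))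
    simp only [LinearEquiv.symm_apply_apply, LinearEquiv.apply_symm_apply] at h
    have h2 : ω₁ (ω₂.symm f) + ω₂ (ω₁.symm f) + B (ω₂.symm (B (ω₁.symm f))) = 0 := by
      rw [show ω₁ (ω₂.symm f) + ω₂ (ω₁.symm f) + B (ω₂.symm (B (ω₁.symm f)))
          = (B (ω₂.symm (B (ω₁.symm f))) + ω₁ (ω₂.symm f)) + ω₂ (ω₁.symm f) from by abel, h]
      abel
    simpa using DFunLike.congr_fun h2 x
  · ext f
    have h := h4 (ω₁.symm f)
    simp only [LinearEquiv.apply_symm_apply] at h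
    have := congrArg ω₁.symm h
    simp only [LinearEquiv.symm_apply_apply] at this
    simpa using this.symm
  · ext x y
    simpa using DFunLike.congr_fun (h4 x) y
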